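/- Positive cumulative bound (lower part): if fl_1,…,fl_n round to nearest in a perfect system with unit roundoff u, and y_0,…,y_n ≥ 0, then the recursively rounded sum ŝ_n satisfies ŝ_n − Σ_{k=0}^n y_k ≥ −(u/(1+u))·Σ_{k=1}^n Σ_{i=0}^k y_i. -/

import Mathlib

noncomputable section

/-- The set of positive normal floating point numbers with exponent `e`. -/
def Eset (β μ : ℕ) (e : ℤ) : Set ℝ :=
  {x | ∃ r : ℕ, r < (β - 1) * β ^ μ ∧ x = (β : ℝ) ^ e * ((β : ℝ) ^ μ + r)}

/-- Perfect floating point system: all integer exponents. -/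
def PerfectF (β μ : ℕ) : Set ℝ :=
  {x | x = 0 ∨ ∃ e : ℤ, x ∈ Eset β μ e ∨ -x ∈ Eset β μ e}

/-- MPFR system: exponents bounded below by `emin`, no subnormals. -/
def MPFRF (β μ : ℕ) (emin : ℤ) : Set ℝ :=
  {x | x = 0 ∨ ∃ e : ℤ, emin ≤ e ∧ (x ∈ Eset β μ e ∨ -x ∈ Eset β μ e)}

/-- Subnormal numbers (both signs) for minimal exponent `emin`. -/
def SubN (β μ : ℕ) (emin : ℤ) : Set ℝ :=
  {x | ∃ r : ℕ, 1 ≤ r ∧ r < β ^ μ ∧ (x = (β : ℝ) ^ emin * r ∨ x = -((β : ℝ) ^ emin * r))}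

/-- IEEE system: MPFR system augmented with subnormal numbers. -/
def IEEEF (β μ : ℕ) (emin : ℤ) : Set ℝ := MPFRF β μ emin ∪ SubN β μ emin

/-- `fl` rounds to nearest in `F`. -/
def RTN (F : Set ℝ) (fl : ℝ → ℝ) : Prop :=
  ∀ z : ℝ, fl z ∈ F ∧ ∀ x ∈ F, |fl z - z| ≤ |x - z|

/-- Recursively rounded sum: `rsum fl y 0 = y 0`,
`rsum fl y (k+1) = fl (k+1) (rsum fl y k + y (k+1))`. -/
def rsum (fl : ℕ → ℝ → ℝ) (y : ℕ → ℝ) : ℕ → ℝ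
  | 0 => y 0
  | k + 1 => fl (k + 1) (rsum fl y k + y (k + 1))

/-- Ties are broken downward. -/
def BreaksTiesDown (F : Set ℝ) (fl : ℝ → ℝ) : Prop :=
  ∀ z : ℝ, ∀ x ∈ F, |x - z| = |fl z - z| → fl z ≤ x

/-- Ties are broken upward. -/
def BreaksTiesUp (F : Set ℝ) (fl : ℝ → ℝ) : Prop :=
  ∀ z : ℝ, ∀ x ∈ F, |x - z| = |fl z - z| → x ≤ fl z

lemma mem_perfect (β μ : ℕ) (hβ : 2 ≤ β) (e : ℤ) (m : ℕ)
    (h1 : β ^ μ ≤ m) (h2 : m ≤ β ^ (μ + 1)) :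
    (β : ℝ) ^ e * (m : ℝ) ∈ PerfectF β μ := by
  have hb0 : (0:ℝ) < β := by positivity
  rcases eq_or_lt_of_le h2 with h2 | h2
  · refine Or.inr ⟨e + 1, Or.inl ⟨0, ?_, ?_⟩⟩
    · have : 0 < β ^ μ := Nat.pow_pos (by omega)
      have : 1 ≤ β - 1 := by omega
      calc 0 < 1 * β ^ μ := by omega
        _ ≤ (β - 1) * β ^ μ := Nat.mul_le_mul_right _ this
    · rw [h2, zpow_add_one₀ (ne_of_gt hb0)]
      push_cast
      ring
  · have hle : β ^ μ ≤ β ^ (μ + 1) := Nat.pow_le_pow_right (by omega) (by omega)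
    refine Or.inr ⟨e, Or.inl ⟨m - β ^ μ, ?_, ?_⟩⟩
    · have : (β - 1) * β ^ μ + β ^ μ = β ^ (μ + 1) := by
        have : (β - 1) + 1 = β := by omega
        calc (β - 1) * β ^ μ + β ^ μ = ((β - 1) + 1) * β ^ μ := by ring
          _ = β * β ^ μ := by rw [this]
          _ = β ^ (μ + 1) := by ring
      omega
    · have : ((m - β ^ μ : ℕ) : ℝ) = (m : ℝ) - (β : ℝ) ^ μ := by
        push_cast [Nat.cast_sub h1]; ring
      rw [this]; ring

lemma key_round (β μ : ℕ) (hβ : 2 ≤ β) (fl : ℝ → ℝ) (hfl : RTN (PerfectF β μ) fl)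
    (z : ℝ) (hz : 0 ≤ z) :
    0 ≤ fl z ∧ z ≤ (1 + 1 / (2 * (β : ℝ) ^ μ)) * fl z := by
  have hb : (1:ℝ) < β := by exact_mod_cast (by omega : 1 < β)
  have hb0 : (0:ℝ) < β := by linarith
  have hbn : (β:ℝ) ≠ 0 := ne_of_gt hb0
  have hbμ : (0:ℝ) < (β:ℝ) ^ μ := by positivity
  rcases eq_or_lt_of_le hz with h0 | h0
  · have h := (hfl z).2 0 (Or.inl rfl)
    rw [← h0] at h ⊢
    have : fl 0 = 0 := by simpa using h
    rw [this]; norm_num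
  · obtain ⟨e, he1, he2⟩ := exists_mem_Ico_zpow h0 hb
    set b := (β : ℝ)
    set step : ℝ := b ^ e / b ^ μ with hstep_def
    have hstep : 0 < step := by positivity
    have hstep_eq : step = b ^ (e - (μ:ℤ)) := by
      rw [zpow_sub₀ hbn, zpow_natCast]
    have hsm : step * b ^ μ = b ^ e := div_mul_cancel₀ _ (ne_of_gt hbμ)
    have hsm1 : step * (b ^ μ * b) = b ^ (e + 1) := by
      rw [zpow_add_one₀ hbn, ← hsm]; ring
    set q : ℝ := z / step with hq_def
    have hq0 : 0 ≤ q := le_of_lt (div_pos h0 hstep)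
    have hqlo : b ^ μ ≤ q := by
      rw [hq_def, le_div_iff₀ hstep]; rw [mul_comm]; rw [hsm] at *; linarith [hsm ▸ he1]
    have hqhi : q < b ^ μ * b := by
      rw [hq_def, div_lt_iff₀ hstep]
      calc z < b ^ (e+1) := he2
        _ = step * (b ^ μ * b) := hsm1.symm
        _ = (b ^ μ * b) * step := by ring
    set m : ℕ := ⌊q⌋₊ with hm_def
    have hm1 : β ^ μ ≤ m := by
      rw [hm_def]; exact Nat.le_floor (by push_cast; exact hqlo)
    have hm2 : m < β ^ (μ + 1) := by
      have : q < ((β ^ (μ+1) : ℕ) : ℝ) := by push_cast [pow_succ]; exact hqhi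
      exact_mod_cast (Nat.floor_lt hq0).2 this
    have hmq : (m : ℝ) ≤ q := Nat.floor_le hq0
    have hqm1 : q < (m : ℝ) + 1 := Nat.lt_floor_add_one q
    -- floats
    have hlo_mem : step * (m : ℝ) ∈ PerfectF β μ := by
      rw [hstep_eq]; exact mem_perfect β μ hβ _ m hm1 (le_of_lt hm2)
    have hhi_mem : step * ((m : ℝ) + 1) ∈ PerfectF β μ := by
      rw [hstep_eq]
      have := mem_perfect β μ hβ (e - (μ:ℤ)) (m + 1) (by omega) (by omega)
      push_cast at this; exact this
    have hbe_mem : (b : ℝ) ^ e ∈ PerfectF β μ := by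
      have h2 : step * ((β ^ μ : ℕ) : ℝ) ∈ PerfectF β μ := by
        rw [hstep_eq]
        exact mem_perfect β μ hβ (e - (μ:ℤ)) (β ^ μ) le_rfl
          (Nat.pow_le_pow_right (by omega) (by omega))
      push_cast at h2
      rwa [hsm] at h2
    have hlo_le : step * (m : ℝ) ≤ z := by
      have := mul_le_mul_of_nonneg_left hmq (le_of_lt hstep)
      rwa [hq_def, mul_div_cancel₀ _ (ne_of_gt hstep)] at this
    have hhi_gt : z < step * ((m : ℝ) + 1) := by
      have := mul_lt_mul_of_pos_left hqm1 hstep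
      rwa [hq_def, mul_div_cancel₀ _ (ne_of_gt hstep)] at this
    -- fl z ≥ b^e
    have hfl_lb : b ^ e ≤ fl z := by
      have h := (hfl z).2 (b ^ e) hbe_mem
      have hval : |b ^ e - z| = z - b ^ e := by
        rw [abs_sub_comm]; exact abs_of_nonneg (by linarith)
      rw [hval] at h
      have := (abs_le.mp h).1
      linarith
    have hfl0 : 0 ≤ fl z := le_trans (le_of_lt (zpow_pos hb0 e)) hfl_lb
    -- half spacing
    have hhalf : z - fl z ≤ step / 2 := by
      rcases le_or_gt (z - step * m) (step / 2) with hc | hc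
      · have h := (hfl z).2 (step * m) hlo_mem
        have hval : |step * (m:ℝ) - z| = z - step * m := by
          rw [abs_sub_comm]; exact abs_of_nonneg (by linarith)
        rw [hval] at h
        have := (abs_le.mp h).1
        linarith
      · have h := (hfl z).2 (step * ((m:ℝ) + 1)) hhi_mem
        have hval : |step * ((m:ℝ) + 1) - z| = step * ((m:ℝ)+1) - z :=
          abs_of_nonneg (by linarith)
        rw [hval] at h
        have h2 := (abs_le.mp h).1
        have : step * ((m:ℝ)+1) - z ≤ step / 2 := by
          have expand : step * ((m:ℝ)+1) = step * m + step := by ring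
          linarith
        linarith
    refine ⟨hfl0, ?_⟩
    have hu_eq : step / 2 = (1 / (2 * b ^ μ)) * b ^ e := by
      rw [hstep_def]; field_simp
    have : (1 / (2 * b ^ μ)) * b ^ e ≤ (1 / (2 * b ^ μ)) * fl z :=
      mul_le_mul_of_nonneg_left hfl_lb (by positivity)
    nlinarith [hhalf, hu_eq]

theorem stmt13 (β μ n : ℕ) (hβ : 2 ≤ β) (hμ : 1 ≤ μ) (hn : 1 ≤ n)
    (u : ℝ) (hu : u = 1 / (2 * (β : ℝ) ^ μ))
    (fl : ℕ → ℝ → ℝ) (hfl : ∀ k, 1 ≤ k → k ≤ n → RTN (PerfectF β μ) (fl k))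
    (y : ℕ → ℝ) (hy : ∀ k, k ≤ n → 0 ≤ y k) :
    -(u / (1 + u)) * ∑ k ∈ Finset.Icc 1 n, ∑ i ∈ Finset.range (k + 1), y i ≤
      rsum fl y n - ∑ k ∈ Finset.range (n + 1), y k := by
  have hε0 : (0:ℝ) < u := by rw [hu]; positivity
  have h1u : (0:ℝ) < 1 + u := by linarith
  set ε : ℝ := u / (1 + u) with hε_def
  have hεnn : 0 ≤ ε := by positivity
  have hεu : ε * (1 + u) = u := div_mul_cancel₀ _ (ne_of_gt h1u)
  have main : ∀ k, k ≤ n → 0 ≤ rsum fl y k ∧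
      (∑ i ∈ Finset.range (k + 1), y i) -
        ε * ∑ j ∈ Finset.Icc 1 k, ∑ i ∈ Finset.range (j + 1), y i ≤ rsum fl y k := by
    intro k
    induction k with
    | zero =>
      intro _
      simp only [rsum, Finset.range_one, Finset.sum_singleton]
      constructor
      · exact hy 0 (by omega)
      · simp
    | succ k ih =>
      intro hk
      obtain ⟨h0, hlow⟩ := ih (by omega)
      have hyk : 0 ≤ y (k + 1) := hy _ hk
      have ht : 0 ≤ rsum fl y k + y (k + 1) := add_nonneg h0 hyk
      have hkey := key_round β μ hβ (fl (k + 1)) (hfl (k + 1) (by omega) hk) _ ht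
      rw [← hu] at hkey
      obtain ⟨hf0, hfle⟩ := hkey
      have hr : rsum fl y (k + 1) = fl (k + 1) (rsum fl y k + y (k + 1)) := rfl
      rw [← hr] at hf0 hfle
      refine ⟨hf0, ?_⟩
      have hSsucc : ∑ i ∈ Finset.range (k + 1 + 1), y i
          = (∑ i ∈ Finset.range (k + 1), y i) + y (k + 1) := Finset.sum_range_succ _ _
      have hAsucc : ∑ j ∈ Finset.Icc 1 (k + 1), ∑ i ∈ Finset.range (j + 1), y i
          = (∑ j ∈ Finset.Icc 1 k, ∑ i ∈ Finset.range (j + 1), y i)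
            + ∑ i ∈ Finset.range (k + 1 + 1), y i := by
        rw [← Finset.sum_Icc_succ_top (by omega : 1 ≤ k + 1)]
      have hA : 0 ≤ ∑ j ∈ Finset.Icc 1 k, ∑ i ∈ Finset.range (j + 1), y i := by
        apply Finset.sum_nonneg
        intro j hj
        apply Finset.sum_nonneg
        intro i hi
        apply hy
        simp only [Finset.mem_Icc] at hj
        simp only [Finset.mem_range] at hi
        omega
      set S := ∑ i ∈ Finset.range (k + 1), y i
      set A := ∑ j ∈ Finset.Icc 1 k, ∑ i ∈ Finset.range (j + 1), y i
      set f := rsum fl y (k + 1)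
      rw [hSsucc, hAsucc, hSsucc]
      -- goal : S + y (k+1) - ε * (A + (S + y (k+1))) ≤ f
      have hchain : S + y (k + 1) - ε * A ≤ (1 + u) * f := by
        calc S + y (k + 1) - ε * A ≤ rsum fl y k + y (k + 1) := by linarith
          _ ≤ (1 + u) * f := hfle
      nlinarith [mul_nonneg hεnn hA, mul_nonneg (mul_nonneg hεnn hε0.le) hA,
        mul_nonneg hεnn (add_nonneg h0 hyk)]
  obtain ⟨_, h⟩ := main n le_rfl
  linarith [h]
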